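/- arXiv:1901.08356 — 2 statements merged into one kernel-verified Lean document; each statement's English description precedes it below -/
import Mathlib

section
/- Let (Ω, F, P) be a probability space, ℍ = (H_t)_{t≥0} a filtration of sub-σ-algebras of F, and Ψ : Ω × [0,∞) → ℝ a jointly measurable process such that E[∫_0^t |Ψ_s| ds] < ∞ for every t ≥ 0. Suppose Ψ̂ : Ω × [0,∞) → ℝ is a jointly measurable process such that Ψ̂_s is H_s-measurable for each s and Ψ̂_s = E[Ψ_s | H_s] almost surely for Lebesgue-a.e. s ≥ 0. Then for all 0 ≤ s ≤ t one has, almost surely, E[ E[∫_0^t Ψ_u du | H_t] − ∫_0^t Ψ̂_u du | H_s ] = E[∫_0^s Ψ_u du | H_s] − ∫_0^s Ψ̂_u du; that is, the process t ↦ E[∫_0^t Ψ_u du | H_t] − ∫_0^t Ψ̂_u du is an ℍ-martingale. -/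
open MeasureTheory Set Filter

namespace CondexpMartAux

variable {Ω : Type*} {m m0 : MeasurableSpace Ω} {μ : Measure Ω}

lemma integral_mul_condexp (hm : m ≤ m0) [IsFiniteMeasure μ] {f g : Ω → ℝ}
    (hf : StronglyMeasurable[m] f) (hfg : Integrable (fun ω => f ω * g ω) μ)
    (hg : Integrable g μ) :
    ∫ ω, f ω * g ω ∂μ = ∫ ω, f ω * (μ[g|m]) ω ∂μ := by
  have h := condExp_mul_of_stronglyMeasurable_left (μ := μ) hf hfg hg
  rw [← integral_condExp hm (f := fun ω => f ω * g ω)]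
  exact integral_congr_ae h

lemma integral_integral_mul [IsFiniteMeasure μ] {ν : Measure ℝ} [SFinite ν] {Φ : ℝ → Ω → ℝ}
    (hΦ : Integrable (Function.uncurry Φ) (ν.prod μ))
    {ξ : Ω → ℝ} (hξm : StronglyMeasurable ξ) {c : ℝ} (hξb : ∀ᵐ ω ∂μ, ‖ξ ω‖ ≤ c) :
    ∫ ω, (∫ u, Φ u ω ∂ν) * ξ ω ∂μ = ∫ u, (∫ ω, Φ u ω * ξ ω ∂μ) ∂ν := by
  have h3 : ∀ᵐ p : Ω × ℝ ∂(μ.prod ν), ‖ξ p.1‖ ≤ c :=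
    Measure.quasiMeasurePreserving_fst.tendsto_ae.eventually hξb
  have hint : Integrable (Function.uncurry fun ω u => Φ u ω * ξ ω) (μ.prod ν) := by
    have h1 : Integrable (fun p : Ω × ℝ => Φ p.2 p.1) (μ.prod ν) := hΦ.swap
    have h2 : AEStronglyMeasurable (fun p : Ω × ℝ => ξ p.1) (μ.prod ν) :=
      (hξm.comp_measurable measurable_fst).aestronglyMeasurable
    exact (h1.bdd_mul h2 h3).congr (Eventually.of_forall fun p => mul_comm _ _)
  have hsw := integral_integral_swap hint
  rw [← hsw]
  refine integral_congr_ae (Eventually.of_forall fun ω => ?_)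
  simp only []
  rw [← integral_mul_const]

lemma integrable_uncurry_prod {ν : Measure ℝ} [SFinite ν] [SigmaFinite μ] {Φ : ℝ → Ω → ℝ}
    (hmeas : Measurable (Function.uncurry Φ))
    (h : (∫⁻ u, ∫⁻ ω, ENNReal.ofReal |Φ u ω| ∂μ ∂ν) < ⊤) :
    Integrable (Function.uncurry Φ) (ν.prod μ) := by
  refine ⟨hmeas.aestronglyMeasurable, ?_⟩
  rw [hasFiniteIntegral_iff_norm, lintegral_prod _ (hmeas.norm.ennreal_ofReal.aemeasurable)]
  simpa [Real.norm_eq_abs] using h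

end CondexpMartAux

open CondexpMartAux

/-- If `Ψ` is a jointly measurable, integrable process and `Ψ̂ s` is a version of the
conditional expectation `E[Ψ s | H s]` for a.e. `s ≥ 0`, then the process
`t ↦ E[∫_0^t Ψ_u du | H t] − ∫_0^t Ψ̂_u du` is a martingale with respect to the
filtration `H`. -/
theorem condexp_integral_sub_integral_condexp_is_martingale
    {Ω : Type*} [inst : MeasurableSpace Ω] (μ : Measure Ω) [IsProbabilityMeasure μ]
    (H : ℝ → MeasurableSpace Ω)
    (hH_mono : ∀ s t : ℝ, 0 ≤ s → s ≤ t → H s ≤ H t)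
    (hH_le : ∀ t : ℝ, 0 ≤ t → H t ≤ inst)
    (Ψ Ψhat : ℝ → Ω → ℝ)
    (hΨ_meas : Measurable (Function.uncurry Ψ))
    (hΨhat_meas : Measurable (Function.uncurry Ψhat))
    (hΨ_int : ∀ t : ℝ, 0 ≤ t →
      ∫⁻ ω, (∫⁻ s in Set.Ioc (0:ℝ) t, ENNReal.ofReal |Ψ s ω|) ∂μ < ⊤)
    (hΨhat_adapted : ∀ s : ℝ, 0 ≤ s → StronglyMeasurable[H s] (Ψhat s))
    (hΨhat_condexp : ∀ᵐ s ∂(volume.restrict (Set.Ici (0:ℝ))),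
      Ψhat s =ᵐ[μ] μ[Ψ s | H s]) :
    ∀ s t : ℝ, 0 ≤ s → s ≤ t →
      μ[(fun ω => (μ[(fun ω' => ∫ u in Set.Ioc (0:ℝ) t, Ψ u ω') | H t]) ω
            - ∫ u in Set.Ioc (0:ℝ) t, Ψhat u ω) | H s]
        =ᵐ[μ]
      fun ω => (μ[(fun ω' => ∫ u in Set.Ioc (0:ℝ) s, Ψ u ω') | H s]) ω
            - ∫ u in Set.Ioc (0:ℝ) s, Ψhat u ω := by
  intro s t hs hst
  have ht0 : (0:ℝ) ≤ t := hs.trans hst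
  have hm_s : H s ≤ inst := hH_le s hs
  have hm_t : H t ≤ inst := hH_le t ht0
  have hm_st : H s ≤ H t := hH_mono s t hs hst
  have hΨE : Measurable (fun p : ℝ × Ω => ENNReal.ofReal |Ψ p.1 p.2|) :=
    hΨ_meas.norm.ennreal_ofReal
  -- swap the iterated lintegrals for Ψ
  have hΨlin : (∫⁻ u in Set.Ioc (0:ℝ) t, ∫⁻ ω, ENNReal.ofReal |Ψ u ω| ∂μ) < ⊤ := by
    have hswap :=
      lintegral_lintegral_swap (μ := volume.restrict (Set.Ioc (0:ℝ) t)) (ν := μ)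
        (f := fun u ω => ENNReal.ofReal |Ψ u ω|) hΨE.aemeasurable
    rw [hswap]
    exact hΨ_int t ht0
  -- a.e. u facts
  have hae : ∀ᵐ u ∂(volume.restrict (Set.Ioc (0:ℝ) t)),
      Integrable (Ψ u) μ ∧ Ψhat u =ᵐ[μ] μ[Ψ u | H u] := by
    have h1 : ∀ᵐ u ∂(volume.restrict (Set.Ioc (0:ℝ) t)),
        (∫⁻ ω, ENNReal.ofReal |Ψ u ω| ∂μ) < ⊤ :=
      ae_lt_top (Measurable.lintegral_prod_right hΨE) hΨlin.ne
    have h2 : ∀ᵐ u ∂(volume.restrict (Set.Ioc (0:ℝ) t)),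
        Ψhat u =ᵐ[μ] μ[Ψ u | H u] :=
      ae_restrict_of_ae_restrict_of_subset (fun x hx => hx.1.le) hΨhat_condexp
    filter_upwards [h1, h2] with u hu1 hu2
    refine ⟨⟨(hΨ_meas.of_uncurry_left).aestronglyMeasurable, ?_⟩, hu2⟩
    rw [hasFiniteIntegral_iff_norm]
    simpa [Real.norm_eq_abs] using hu1
  have haehat : ∀ᵐ u ∂(volume.restrict (Set.Ioc (0:ℝ) t)),
      Integrable (Ψhat u) μ ∧
      (∫⁻ ω, ENNReal.ofReal |Ψhat u ω| ∂μ) ≤ ∫⁻ ω, ENNReal.ofReal |Ψ u ω| ∂μ := by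
    filter_upwards [hae] with u hu
    obtain ⟨hint, heq⟩ := hu
    have h1 : Integrable (Ψhat u) μ := integrable_condExp.congr heq.symm
    refine ⟨h1, ?_⟩
    have e1 : (∫⁻ ω, ENNReal.ofReal |Ψhat u ω| ∂μ)
        = ∫⁻ ω, ENNReal.ofReal |(μ[Ψ u | H u]) ω| ∂μ :=
      lintegral_congr_ae (heq.mono fun ω h => by simp only []; rw [h])
    have e2 : (∫⁻ ω, ENNReal.ofReal |(μ[Ψ u | H u]) ω| ∂μ)
        = ENNReal.ofReal (∫ ω, ‖(μ[Ψ u | H u]) ω‖ ∂μ) := by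
      rw [ofReal_integral_norm_eq_lintegral_enorm integrable_condExp]
      simp [← Real.enorm_eq_ofReal_abs]
    have e3 : (∫⁻ ω, ENNReal.ofReal |Ψ u ω| ∂μ)
        = ENNReal.ofReal (∫ ω, ‖Ψ u ω‖ ∂μ) := by
      rw [ofReal_integral_norm_eq_lintegral_enorm hint]
      simp [← Real.enorm_eq_ofReal_abs]
    rw [e1, e2, e3]
    refine ENNReal.ofReal_le_ofReal ?_
    simpa [Real.norm_eq_abs] using integral_abs_condExp_le (μ := μ) (m := H u) (Ψ u)
  -- product integrability of Ψ and Ψhat on subintervals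
  have hΨprod : ∀ a b : ℝ, 0 ≤ a → b ≤ t →
      Integrable (Function.uncurry Ψ) ((volume.restrict (Set.Ioc a b)).prod μ) := by
    intro a b ha hb
    refine integrable_uncurry_prod hΨ_meas (lt_of_le_of_lt ?_ hΨlin)
    exact lintegral_mono_set (Set.Ioc_subset_Ioc ha hb)
  have hΨhatprod : ∀ a b : ℝ, 0 ≤ a → b ≤ t →
      Integrable (Function.uncurry Ψhat) ((volume.restrict (Set.Ioc a b)).prod μ) := by
    intro a b ha hb
    refine integrable_uncurry_prod hΨhat_meas (lt_of_le_of_lt ?_ hΨlin)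
    calc (∫⁻ u in Set.Ioc a b, ∫⁻ ω, ENNReal.ofReal |Ψhat u ω| ∂μ)
        ≤ ∫⁻ u in Set.Ioc a b, ∫⁻ ω, ENNReal.ofReal |Ψ u ω| ∂μ := by
          refine lintegral_mono_ae ?_
          exact (ae_restrict_of_ae_restrict_of_subset (Set.Ioc_subset_Ioc ha hb)
            haehat).mono fun u hu => hu.2
      _ ≤ ∫⁻ u in Set.Ioc (0:ℝ) t, ∫⁻ ω, ENNReal.ofReal |Ψ u ω| ∂μ :=
          lintegral_mono_set (Set.Ioc_subset_Ioc ha hb)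
  -- integrability of the time integrals
  have hCt_int : Integrable (fun ω => ∫ u in Set.Ioc (0:ℝ) t, Ψ u ω) μ :=
    (hΨprod 0 t le_rfl le_rfl).integral_prod_right
  have hCs_int : Integrable (fun ω => ∫ u in Set.Ioc (0:ℝ) s, Ψ u ω) μ :=
    (hΨprod 0 s le_rfl hst).integral_prod_right
  have hC'_int : Integrable (fun ω => ∫ u in Set.Ioc s t, Ψ u ω) μ :=
    (hΨprod s t hs le_rfl).integral_prod_right
  have hBt_int : Integrable (fun ω => ∫ u in Set.Ioc (0:ℝ) t, Ψhat u ω) μ :=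
    (hΨhatprod 0 t le_rfl le_rfl).integral_prod_right
  have hBs_int : Integrable (fun ω => ∫ u in Set.Ioc (0:ℝ) s, Ψhat u ω) μ :=
    (hΨhatprod 0 s le_rfl hst).integral_prod_right
  have hB'_int : Integrable (fun ω => ∫ u in Set.Ioc s t, Ψhat u ω) μ :=
    (hΨhatprod s t hs le_rfl).integral_prod_right
  -- splitting of the time integrals
  have hsplit : ∀ (Φ : ℝ → Ω → ℝ),
      Integrable (Function.uncurry Φ) ((volume.restrict (Set.Ioc (0:ℝ) t)).prod μ) →
      (fun ω => ∫ u in Set.Ioc (0:ℝ) t, Φ u ω)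
        =ᵐ[μ] fun ω => (∫ u in Set.Ioc (0:ℝ) s, Φ u ω) + ∫ u in Set.Ioc s t, Φ u ω := by
    intro Φ hΦ
    filter_upwards [hΦ.prod_left_ae] with ω hω
    have h1 : IntegrableOn (fun u => Φ u ω) (Set.Ioc (0:ℝ) s) volume :=
      hω.mono_measure (Measure.restrict_mono (Set.Ioc_subset_Ioc le_rfl hst) le_rfl)
    have h2 : IntegrableOn (fun u => Φ u ω) (Set.Ioc s t) volume :=
      hω.mono_measure (Measure.restrict_mono (Set.Ioc_subset_Ioc hs le_rfl) le_rfl)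
    rw [← Set.Ioc_union_Ioc_eq_Ioc hs hst,
      setIntegral_union (Set.Ioc_disjoint_Ioc_of_le le_rfl) measurableSet_Ioc h1 h2]
  -- indicator helpers
  have hind : ∀ (f : Ω → ℝ) (A : Set Ω), MeasurableSet A →
      ∫ ω in A, f ω ∂μ = ∫ ω, f ω * A.indicator (fun _ => (1:ℝ)) ω ∂μ := by
    intro f A hA
    rw [← integral_indicator hA]
    congr 1
    ext ω
    by_cases h : ω ∈ A <;> simp [h]
  have hmulint : ∀ {X b : Ω → ℝ} {c : ℝ}, Integrable X μ → AEStronglyMeasurable b μ →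
      (∀ᵐ ω ∂μ, ‖b ω‖ ≤ c) → Integrable (fun ω => X ω * b ω) μ := by
    intro X b c hX hb hbc
    exact (hX.bdd_mul hb hbc).congr (Eventually.of_forall fun ω => mul_comm _ _)
  have hmc : ∀ (f g : Ω → ℝ), ∫ ω, f ω * g ω ∂μ = ∫ ω, g ω * f ω ∂μ := by
    intro f g
    exact integral_congr_ae (Eventually.of_forall fun ω => mul_comm _ _)
  -- Claim 2 : B_s is a.e. equal to its conditional expectation w.r.t. H s
  have claim2 : (fun ω => ∫ u in Set.Ioc (0:ℝ) s, Ψhat u ω)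
      =ᵐ[μ] μ[(fun ω => ∫ u in Set.Ioc (0:ℝ) s, Ψhat u ω) | H s] := by
    refine ae_eq_of_forall_setIntegral_eq_of_sigmaFinite
      (fun A _ _ => hBs_int.integrableOn)
      (fun A _ _ => integrable_condExp.integrableOn) ?_
    intro A hA _
    set indA : Ω → ℝ := A.indicator (fun _ => (1:ℝ)) with hindA
    have hindA_sm : StronglyMeasurable indA := stronglyMeasurable_const.indicator hA
    have hindA_int : Integrable indA μ := (integrable_const (1:ℝ)).indicator hA
    have hindA_bd : ∀ᵐ ω ∂μ, ‖indA ω‖ ≤ 1 := by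
      refine Eventually.of_forall fun ω => ?_
      by_cases h : ω ∈ A <;> simp [hindA, h]
    set ξ : Ω → ℝ := μ[indA | H s] with hξ
    have hξ_sm : StronglyMeasurable[H s] ξ := stronglyMeasurable_condExp
    have hξ_bd : ∀ᵐ ω ∂μ, ‖ξ ω‖ ≤ 1 := by
      have h1 : ∀ᵐ ω ∂μ, |indA ω| ≤ ((1 : NNReal) : ℝ) := by
        simpa [Real.norm_eq_abs] using hindA_bd
      simpa [Real.norm_eq_abs] using ae_bdd_condExp_of_ae_bdd h1
    have hξ_int : Integrable ξ μ := integrable_condExp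
    have hFub : ∀ (k : Ω → ℝ), StronglyMeasurable k → (∀ᵐ ω ∂μ, ‖k ω‖ ≤ 1) →
        ∫ ω, (∫ u in Set.Ioc (0:ℝ) s, Ψhat u ω) * k ω ∂μ
          = ∫ u in Set.Ioc (0:ℝ) s, ∫ ω, Ψhat u ω * k ω ∂μ := by
      intro k hk hkb
      exact integral_integral_mul (hΨhatprod 0 s le_rfl hst) hk hkb
    have hae_s : ∀ᵐ u ∂(volume.restrict (Set.Ioc (0:ℝ) s)),
        Integrable (Ψhat u) μ ∧ u ∈ Set.Ioc (0:ℝ) s := by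
      filter_upwards [ae_restrict_of_ae_restrict_of_subset
        (Set.Ioc_subset_Ioc le_rfl hst) haehat, ae_restrict_mem measurableSet_Ioc]
        with u hu hmem
      exact ⟨hu.1, hmem⟩
    have hptwise : ∀ᵐ u ∂(volume.restrict (Set.Ioc (0:ℝ) s)),
        ∫ ω, Ψhat u ω * ξ ω ∂μ = ∫ ω, Ψhat u ω * indA ω ∂μ := by
      filter_upwards [hae_s] with u hu
      obtain ⟨hu_int, hu_mem⟩ := hu
      have hu0 : (0:ℝ) ≤ u := hu_mem.1.le
      have hm_u : H u ≤ inst := hH_le u hu0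
      have hm_us : H u ≤ H s := hH_mono u s hu0 hu_mem.2
      have hsm_u : StronglyMeasurable[H u] (Ψhat u) := hΨhat_adapted u hu0
      have i1 : Integrable (fun ω => Ψhat u ω * ξ ω) μ :=
        hmulint hu_int (hξ_sm.mono hm_s).aestronglyMeasurable hξ_bd
      have i2 : Integrable (fun ω => Ψhat u ω * indA ω) μ :=
        hmulint hu_int hindA_sm.aestronglyMeasurable hindA_bd
      calc ∫ ω, Ψhat u ω * ξ ω ∂μ
          = ∫ ω, Ψhat u ω * (μ[ξ | H u]) ω ∂μ :=
            integral_mul_condexp hm_u hsm_u i1 hξ_int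
        _ = ∫ ω, Ψhat u ω * (μ[indA | H u]) ω ∂μ := by
            refine integral_congr_ae ?_
            filter_upwards [condExp_condExp_of_le hm_us hm_s (f := indA)] with ω hω
            rw [hξ, hω]
        _ = ∫ ω, Ψhat u ω * indA ω ∂μ :=
            (integral_mul_condexp hm_u hsm_u i2 hindA_int).symm
    calc ∫ ω in A, (∫ u in Set.Ioc (0:ℝ) s, Ψhat u ω) ∂μ
        = ∫ ω, (∫ u in Set.Ioc (0:ℝ) s, Ψhat u ω) * indA ω ∂μ := hind _ A hA
      _ = ∫ u in Set.Ioc (0:ℝ) s, ∫ ω, Ψhat u ω * indA ω ∂μ :=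
          hFub indA hindA_sm hindA_bd
      _ = ∫ u in Set.Ioc (0:ℝ) s, ∫ ω, Ψhat u ω * ξ ω ∂μ :=
          (integral_congr_ae hptwise).symm
      _ = ∫ ω, (∫ u in Set.Ioc (0:ℝ) s, Ψhat u ω) * ξ ω ∂μ :=
          (hFub ξ (hξ_sm.mono hm_s) hξ_bd).symm
      _ = ∫ ω, ξ ω * (∫ u in Set.Ioc (0:ℝ) s, Ψhat u ω) ∂μ := hmc _ _
      _ = ∫ ω, ξ ω * (μ[(fun ω => ∫ u in Set.Ioc (0:ℝ) s, Ψhat u ω) | H s]) ω ∂μ :=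
          integral_mul_condexp hm_s hξ_sm
            ((hmulint hBs_int (hξ_sm.mono hm_s).aestronglyMeasurable hξ_bd).congr
              (Eventually.of_forall fun ω => mul_comm _ _)) hBs_int
      _ = ∫ ω, (μ[(fun ω => ∫ u in Set.Ioc (0:ℝ) s, Ψhat u ω) | H s]) ω * ξ ω ∂μ := hmc _ _
      _ = ∫ ω, (μ[(fun ω => ∫ u in Set.Ioc (0:ℝ) s, Ψhat u ω) | H s]) ω * indA ω ∂μ := by
          rw [hξ]
          exact (integral_mul_condexp hm_s stronglyMeasurable_condExp
            (hmulint integrable_condExp hindA_sm.aestronglyMeasurable hindA_bd)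
            hindA_int).symm
      _ = ∫ ω in A, (μ[(fun ω => ∫ u in Set.Ioc (0:ℝ) s, Ψhat u ω) | H s]) ω ∂μ :=
          (hind _ A hA).symm
  -- Claim 1 : conditional expectation of the increment difference vanishes
  have claim1 : (0 : Ω → ℝ) =ᵐ[μ]
      μ[(fun ω => (∫ u in Set.Ioc s t, Ψ u ω) - ∫ u in Set.Ioc s t, Ψhat u ω) | H s] := by
    refine ae_eq_condExp_of_forall_setIntegral_eq hm_s (hC'_int.sub hB'_int)
      (fun A _ _ => (integrable_zero _ _ _).integrableOn) ?_ ?_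
    · intro A hA _
      have hA' : MeasurableSet A := hm_s A hA
      set indA : Ω → ℝ := A.indicator (fun _ => (1:ℝ)) with hindA
      have hindA_sm : StronglyMeasurable indA := stronglyMeasurable_const.indicator hA'
      have hindA_int : Integrable indA μ := (integrable_const (1:ℝ)).indicator hA'
      have hindA_bd : ∀ᵐ ω ∂μ, ‖indA ω‖ ≤ 1 := by
        refine Eventually.of_forall fun ω => ?_
        by_cases h : ω ∈ A <;> simp [hindA, h]
      have hae_st : ∀ᵐ u ∂(volume.restrict (Set.Ioc s t)),
          (Integrable (Ψ u) μ ∧ Ψhat u =ᵐ[μ] μ[Ψ u | H u]) ∧ u ∈ Set.Ioc s t := by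
        filter_upwards [ae_restrict_of_ae_restrict_of_subset
          (Set.Ioc_subset_Ioc hs le_rfl) hae, ae_restrict_mem measurableSet_Ioc]
          with u hu hmem
        exact ⟨hu, hmem⟩
      have hptw : ∀ᵐ u ∂(volume.restrict (Set.Ioc s t)),
          ∫ ω, Ψ u ω * indA ω ∂μ = ∫ ω, Ψhat u ω * indA ω ∂μ := by
        filter_upwards [hae_st] with u hu
        obtain ⟨⟨hu_int, heq⟩, hmem⟩ := hu
        have hu0 : (0:ℝ) ≤ u := hs.trans hmem.1.le
        have hAu : MeasurableSet[H u] A := hH_mono s u hs hmem.1.le A hA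
        calc ∫ ω, Ψ u ω * indA ω ∂μ
            = ∫ ω in A, Ψ u ω ∂μ := (hind (Ψ u) A hA').symm
          _ = ∫ ω in A, (μ[Ψ u | H u]) ω ∂μ :=
              (setIntegral_condExp (hH_le u hu0) hu_int hAu).symm
          _ = ∫ ω in A, Ψhat u ω ∂μ := by
              refine setIntegral_congr_ae hA' ?_
              exact heq.symm.mono fun ω h _ => h
          _ = ∫ ω, Ψhat u ω * indA ω ∂μ := hind (Ψhat u) A hA'
      have hCA : ∫ ω in A, (∫ u in Set.Ioc s t, Ψ u ω) ∂μ
          = ∫ u in Set.Ioc s t, ∫ ω, Ψ u ω * indA ω ∂μ := by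
        rw [hind _ A hA']
        exact integral_integral_mul (hΨprod s t hs le_rfl) hindA_sm hindA_bd
      have hBA : ∫ ω in A, (∫ u in Set.Ioc s t, Ψhat u ω) ∂μ
          = ∫ u in Set.Ioc s t, ∫ ω, Ψhat u ω * indA ω ∂μ := by
        rw [hind _ A hA']
        exact integral_integral_mul (hΨhatprod s t hs le_rfl) hindA_sm hindA_bd
      have hsub : ∫ ω in A, ((∫ u in Set.Ioc s t, Ψ u ω) - ∫ u in Set.Ioc s t, Ψhat u ω) ∂μ
          = (∫ ω in A, (∫ u in Set.Ioc s t, Ψ u ω) ∂μ)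
            - ∫ ω in A, (∫ u in Set.Ioc s t, Ψhat u ω) ∂μ :=
        integral_sub hC'_int.integrableOn hB'_int.integrableOn
      have hz : ∫ x in A, (0 : Ω → ℝ) x ∂μ = 0 := by simp
      rw [hz, hsub, hCA, hBA, integral_congr_ae hptw, sub_self]
    · exact StronglyMeasurable.aestronglyMeasurable
        (@stronglyMeasurable_zero Ω ℝ (H s) _ _)
  -- assemble
  have hmain : μ[(fun ω => (μ[(fun ω' => ∫ u in Set.Ioc (0:ℝ) t, Ψ u ω') | H t]) ω
        - ∫ u in Set.Ioc (0:ℝ) t, Ψhat u ω) | H s]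
      =ᵐ[μ] μ[μ[(fun ω' => ∫ u in Set.Ioc (0:ℝ) t, Ψ u ω') | H t] | H s]
        - μ[(fun ω => ∫ u in Set.Ioc (0:ℝ) t, Ψhat u ω) | H s] :=
    condExp_sub integrable_condExp hBt_int _
  have h2 : μ[μ[(fun ω' => ∫ u in Set.Ioc (0:ℝ) t, Ψ u ω') | H t] | H s]
      =ᵐ[μ] μ[(fun ω' => ∫ u in Set.Ioc (0:ℝ) t, Ψ u ω') | H s] :=
    condExp_condExp_of_le hm_st hm_t
  have h3 : μ[(fun ω' => ∫ u in Set.Ioc (0:ℝ) t, Ψ u ω') | H s]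
      =ᵐ[μ] μ[(fun ω => ∫ u in Set.Ioc (0:ℝ) s, Ψ u ω) | H s]
        + μ[(fun ω => ∫ u in Set.Ioc s t, Ψ u ω) | H s] :=
    (condExp_congr_ae (hsplit Ψ (hΨprod 0 t le_rfl le_rfl))).trans
      (condExp_add hCs_int hC'_int _)
  have h4 : μ[(fun ω => ∫ u in Set.Ioc (0:ℝ) t, Ψhat u ω) | H s]
      =ᵐ[μ] μ[(fun ω => ∫ u in Set.Ioc (0:ℝ) s, Ψhat u ω) | H s]
        + μ[(fun ω => ∫ u in Set.Ioc s t, Ψhat u ω) | H s] :=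
    (condExp_congr_ae (hsplit Ψhat (hΨhatprod 0 t le_rfl le_rfl))).trans
      (condExp_add hBs_int hB'_int _)
  have hsubCB : μ[(fun ω => (∫ u in Set.Ioc s t, Ψ u ω) - ∫ u in Set.Ioc s t, Ψhat u ω) | H s]
      =ᵐ[μ] μ[(fun ω => ∫ u in Set.Ioc s t, Ψ u ω) | H s]
        - μ[(fun ω => ∫ u in Set.Ioc s t, Ψhat u ω) | H s] :=
    condExp_sub hC'_int hB'_int _
  have claim1' : μ[(fun ω => ∫ u in Set.Ioc s t, Ψ u ω) | H s]
      =ᵐ[μ] μ[(fun ω => ∫ u in Set.Ioc s t, Ψhat u ω) | H s] := by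
    filter_upwards [claim1, hsubCB] with ω h1 h2'
    have h3' : (0:ℝ) = (μ[(fun ω => ∫ u in Set.Ioc s t, Ψ u ω) | H s]) ω
        - (μ[(fun ω => ∫ u in Set.Ioc s t, Ψhat u ω) | H s]) ω := by
      rw [← Pi.sub_apply, ← h2']
      exact h1
    linarith
  refine hmain.trans ?_
  filter_upwards [h2, h3, h4, claim1', claim2.symm] with ω e2 e3 e4 ec1 ec2
  simp only [Pi.sub_apply, Pi.add_apply] at *
  rw [e2, e3, e4, ec1, ec2]
  ring
end

section
/- In the setting of the one-dimensional optimal stopping problem v_⋆(x) := inf_τ E[ ∫_0^τ e^{−ρt} Ψ^x_t h'(Ψ^x_t) dt + 1_{{τ < ∞}} e^{−ρτ} Ψ^x_τ ], assume additionally ρ > max(β₂ + σ²/2, γβ₂ + (σ²/2)γ(γ − 1)). If 0 < x₁ ≤ x₂ and v_⋆(x₁) ≥ x₁, then v_⋆(x₂) ≥ x₂; equivalently, the stopping set { x > 0 : v_⋆(x) ≥ x } is an upward-closed subset of (0, ∞). -/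
open MeasureTheory ProbabilityTheory ENNReal

/-- `W` is a standard one-dimensional Brownian motion on `(Ω, F, P)`. -/
def IsStandardBM {Ω : Type*} [MeasurableSpace Ω] (μ : Measure Ω) (W : ℝ → Ω → ℝ) : Prop :=
  (∀ t : ℝ, Measurable (W t)) ∧
  (∀ᵐ ω ∂μ, W 0 ω = 0) ∧
  (∀ᵐ ω ∂μ, Continuous fun t => W t ω) ∧
  (∀ (n : ℕ) (t : ℕ → ℝ), Monotone t → (∀ i, 0 ≤ t i) →
    iIndepFun (m := fun _ : Fin n => (inferInstance : MeasurableSpace ℝ))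
      (fun i ω => W (t (i + 1)) ω - W (t i) ω) μ) ∧
  (∀ s t : ℝ, 0 ≤ s → s ≤ t →
    μ.map (fun ω => W t ω - W s ω) = gaussianReal 0 (Real.toNNReal (t - s)))

/-- The geometric Brownian motion `Ψ^x_t = x exp((β₂ − σ²/2)t + σ W_t)`. -/
noncomputable def gbm {Ω : Type*} (W : ℝ → Ω → ℝ) (β₂ σ x : ℝ) (t : ℝ) (ω : Ω) : ℝ :=
  x * Real.exp ((β₂ - σ ^ 2 / 2) * t + σ * W t ω)

/-- The natural filtration generated by the process `W`: `σ(W_s : 0 ≤ s ≤ t)`. -/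
def natFilt {Ω : Type*} (W : ℝ → Ω → ℝ) (t : ℝ) : MeasurableSpace Ω :=
  ⨆ s ∈ Set.Icc (0:ℝ) t, MeasurableSpace.comap (W s) (inferInstance : MeasurableSpace ℝ)

/-- `τ : Ω → [0,∞]` is a stopping time of the natural filtration of `W`. -/
def IsNatStoppingTime {Ω : Type*} (W : ℝ → Ω → ℝ) (τ : Ω → ℝ≥0∞) : Prop :=
  ∀ t : ℝ, 0 ≤ t → MeasurableSet[natFilt W t] {ω | τ ω ≤ ENNReal.ofReal t}

/-- The cost `E[∫_0^τ e^{−ρt} X_t h'(X_t) dt + 1_{τ<∞} e^{−ρτ} X_τ]` associated with the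
stopping time `τ` (the terminal payoff being `0` on `{τ = ∞}`). -/
noncomputable def stopCost {Ω : Type*} [MeasurableSpace Ω] (μ : Measure Ω) (ρ : ℝ)
    (h' : ℝ → ℝ) (X : ℝ → Ω → ℝ) (τ : Ω → ℝ≥0∞) : ℝ≥0∞ :=
  ∫⁻ ω,
    (∫⁻ t in {t : ℝ | 0 ≤ t ∧ ENNReal.ofReal t < τ ω},
        ENNReal.ofReal (Real.exp (-ρ * t) * X t ω * h' (X t ω)))
      + (if τ ω < ⊤ then
          ENNReal.ofReal (Real.exp (-ρ * (τ ω).toReal) * X (τ ω).toReal ω) else 0) ∂μ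

/-- The value `v(x) = inf_τ stopCost` of the optimal stopping problem, the infimum being
over all stopping times of the natural filtration of `W`. -/
noncomputable def stopValue {Ω : Type*} [MeasurableSpace Ω] (μ : Measure Ω) (ρ : ℝ)
    (h' : ℝ → ℝ) (W : ℝ → Ω → ℝ) (X : ℝ → Ω → ℝ) : ℝ≥0∞ :=
  ⨅ τ : {τ : Ω → ℝ≥0∞ // IsNatStoppingTime W τ}, stopCost μ ρ h' X τ.1

/-- The stopping set `{ x > 0 : v_⋆(x) ≥ x }` of the one-dimensional stopping problem is
upward closed: if `0 < x₁ ≤ x₂` and `v_⋆(x₁) ≥ x₁` then `v_⋆(x₂) ≥ x₂`. -/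
theorem stopping_set_upward_closed
    {Ω : Type*} [MeasurableSpace Ω] (μ : Measure Ω) [IsProbabilityMeasure μ]
    (W : ℝ → Ω → ℝ) (hW : IsStandardBM μ W)
    (β₂ σ : ℝ) (hσ : 0 < σ)
    (γ K₁ : ℝ) (hγ : 1 < γ) (hK₁ : 0 < K₁)
    (h h' : ℝ → ℝ)
    (hconv : ConvexOn ℝ Set.univ h)
    (hderiv : ∀ u : ℝ, HasDerivAt h (h' u) u)
    (hh'_cont : Continuous h')
    (hmono : MonotoneOn h (Set.Ici (0:ℝ)))
    (h0 : h 0 = 0)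
    (hh'_bound : ∀ u : ℝ, 0 ≤ u → |h' u| ≤ K₁ * (1 + u ^ (γ - 1)))
    (ρ : ℝ) (hρ : max (β₂ + σ ^ 2 / 2) (γ * β₂ + σ ^ 2 / 2 * γ * (γ - 1)) < ρ) :
    ∀ x₁ x₂ : ℝ, 0 < x₁ → x₁ ≤ x₂ →
      ENNReal.ofReal x₁ ≤ stopValue μ ρ h' W (gbm W β₂ σ x₁) →
      ENNReal.ofReal x₂ ≤ stopValue μ ρ h' W (gbm W β₂ σ x₂) := by
  intro x₁ x₂ hx₁ hle hv
  set c := x₂ / x₁ with hc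
  have hc1 : 1 ≤ c := (one_le_div hx₁).mpr hle
  have hc0 : (0:ℝ) ≤ c := by linarith
  have hx₂ : x₂ = c * x₁ := by rw [hc, div_mul_cancel₀ _ hx₁.ne']
  -- h' is monotone
  have hmono' : Monotone h' := by
    intro a b hab
    have := hconv.monotoneOn_deriv (fun u _ => (hderiv u).differentiableAt)
      (Set.mem_univ a) (Set.mem_univ b) hab
    simpa [(hderiv a).deriv, (hderiv b).deriv] using this
  -- h' is nonnegative on positives
  have hpos : ∀ u : ℝ, 0 < u → 0 ≤ h' u := by
    intro u hu
    have hs : slope h (u/2) u ≤ h' u :=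
      hconv.slope_le_of_hasDerivAt (Set.mem_univ _) (Set.mem_univ _) (by linarith) (hderiv u)
    have h1 : h (u/2) ≤ h u := hmono (by simp; linarith) (by simp; linarith) (by linarith)
    have : (0:ℝ) ≤ slope h (u/2) u := by
      rw [slope_def_field]
      apply div_nonneg <;> linarith
    linarith
  -- the GBMs scale
  have hgbm : ∀ t ω, gbm W β₂ σ x₂ t ω = c * gbm W β₂ σ x₁ t ω := by
    intro t ω
    simp only [gbm, hx₂]; ring
  have hXpos : ∀ t ω, 0 < gbm W β₂ σ x₁ t ω := fun t ω =>
    mul_pos hx₁ (Real.exp_pos _)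
  -- key cost comparison
  have hkey : ∀ τ : Ω → ℝ≥0∞,
      ENNReal.ofReal c * stopCost μ ρ h' (gbm W β₂ σ x₁) τ ≤
        stopCost μ ρ h' (gbm W β₂ σ x₂) τ := by
    intro τ
    unfold stopCost
    rw [← lintegral_const_mul' _ _ ENNReal.ofReal_ne_top]
    refine lintegral_mono fun ω => ?_
    rw [mul_add]
    gcongr
    · rw [← lintegral_const_mul' _ _ ENNReal.ofReal_ne_top]
      refine lintegral_mono fun t => ?_
      rw [← ENNReal.ofReal_mul hc0]
      apply ENNReal.ofReal_le_ofReal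
      rw [hgbm]
      set X := gbm W β₂ σ x₁ t ω with hX
      have h1 : h' X ≤ h' (c * X) := hmono' (by nlinarith [hXpos t ω])
      have h2 : 0 ≤ h' X := hpos _ (hXpos t ω)
      have h3 : 0 ≤ Real.exp (-ρ * t) * X := le_of_lt (mul_pos (Real.exp_pos _) (hXpos t ω))
      calc c * (Real.exp (-ρ * t) * X * h' X)
          = (Real.exp (-ρ * t) * X) * (c * h' X) := by ring
        _ ≤ (Real.exp (-ρ * t) * X) * (c * h' (c * X)) := by
            apply mul_le_mul_of_nonneg_left _ h3
            exact mul_le_mul_of_nonneg_left h1 hc0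
        _ = Real.exp (-ρ * t) * (c * X) * h' (c * X) := by ring
    · by_cases hτ : τ ω < ⊤
      · simp only [hτ, if_true]
        rw [← ENNReal.ofReal_mul hc0, hgbm]
        apply ENNReal.ofReal_le_ofReal
        apply le_of_eq; ring
      · simp [hτ]
  -- conclude
  refine le_iInf fun τ => ?_
  have h1 : ENNReal.ofReal x₁ ≤ stopCost μ ρ h' (gbm W β₂ σ x₁) τ.1 :=
    le_trans hv (iInf_le _ τ)
  calc ENNReal.ofReal x₂ = ENNReal.ofReal c * ENNReal.ofReal x₁ := by
        rw [← ENNReal.ofReal_mul hc0, ← hx₂]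
    _ ≤ ENNReal.ofReal c * stopCost μ ρ h' (gbm W β₂ σ x₁) τ.1 := by gcongr
    _ ≤ _ := hkey τ.1
end
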